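/- arXiv:2209.10289 — 2 statements merged into one kernel-verified Lean document; each statement's English description precedes it below -/
import Mathlib

section
/- Let K be a field of characteristic zero, V a finite-dimensional K-vector space, and φ : V → V a K-linear endomorphism whose characteristic polynomial is the image in K[T] of a polynomial χ ∈ ℚ[T] all of whose complex roots have absolute value q^{a/2}, where q is a power of a prime and a ∈ ℤ. Let P ∈ Poly_b with b ∈ ℤ and b ≠ a. Then P(φ) : V → V is a linear automorphism of V. (This weight-separation invertibility is the purity argument used in the proof of the short exact sequence for finite polynomial cohomology, Corollary 'short exact sequence of fp coh'.) -/
open Polynomial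

/-- Weight-separation invertibility: if the characteristic polynomial of `φ` comes
from a rational polynomial `χ` all of whose complex roots have absolute value
`q^(a/2)`, and `P ∈ Poly_b` (constant coefficient `1`, all complex roots of
absolute value `q^(b/2)`) with `b ≠ a`, then `P(φ)` is a linear automorphism. -/
theorem stmt_2 (K : Type*) [Field K] [CharZero K]
    (V : Type*) [AddCommGroup V] [Module K V] [FiniteDimensional K V]
    (φ : V →ₗ[K] V)
    (q : ℕ) (hq : ∃ p k : ℕ, p.Prime ∧ 0 < k ∧ q = p ^ k)
    (a b : ℤ) (hab : b ≠ a)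
    (χ : Polynomial ℚ) (hχ : LinearMap.charpoly φ = χ.map (algebraMap ℚ K))
    (hχroots : ∀ z : ℂ, (χ.map (algebraMap ℚ ℂ)).IsRoot z →
      ‖z‖ = (q : ℝ) ^ ((a : ℝ) / 2))
    (P : Polynomial ℚ) (hP0 : P.coeff 0 = 1)
    (hProots : ∀ z : ℂ, (P.map (algebraMap ℚ ℂ)).IsRoot z →
      ‖z‖ = (q : ℝ) ^ ((b : ℝ) / 2)) :
    Function.Bijective (Polynomial.aeval φ (P.map (algebraMap ℚ K)) : V →ₗ[K] V) := by
  classical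
  -- q > 1
  obtain ⟨p, k, hp, hk, rfl⟩ := hq
  have hq1 : (1 : ℝ) < (p ^ k : ℕ) := by
    have : 2 ≤ p ^ k := le_trans hp.two_le (Nat.le_self_pow hk.ne' p)
    exact_mod_cast lt_of_lt_of_le one_lt_two (by exact_mod_cast this)
  -- P ≠ 0, χ ≠ 0
  have hPne : P ≠ 0 := fun h => by simp [h] at hP0
  have hχK : χ.map (algebraMap ℚ K) ≠ 0 := by
    rw [← hχ]; exact (LinearMap.charpoly_monic φ).ne_zero
  have hχne : χ ≠ 0 := fun h => hχK (by simp [h])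
  -- Coprimality over ℂ
  have hcopC : IsCoprime (P.map (algebraMap ℚ ℂ)) (χ.map (algebraMap ℚ ℂ)) := by
    by_contra hnc
    rw [← EuclideanDomain.gcd_isUnit_iff] at hnc
    set g := EuclideanDomain.gcd (P.map (algebraMap ℚ ℂ)) (χ.map (algebraMap ℚ ℂ)) with hg
    have hgne : g ≠ 0 := by
      intro h0
      rw [EuclideanDomain.gcd_eq_zero_iff] at h0
      exact hPne (by
        have := h0.1
        rwa [Polynomial.map_eq_zero] at this)
    have hdeg : 0 < g.degree := by
      rcases lt_or_eq_of_le (Polynomial.zero_le_degree_iff.mpr hgne) with h | h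
      · exact h
      · exact absurd (Polynomial.isUnit_iff_degree_eq_zero.mpr h.symm) hnc
    obtain ⟨z, hz⟩ := Complex.exists_root hdeg
    have hzP : (P.map (algebraMap ℚ ℂ)).IsRoot z :=
      hz.dvd (EuclideanDomain.gcd_dvd_left _ _)
    have hzχ : (χ.map (algebraMap ℚ ℂ)).IsRoot z :=
      hz.dvd (EuclideanDomain.gcd_dvd_right _ _)
    have h1 := hProots z hzP
    have h2 := hχroots z hzχ
    have : ((p ^ k : ℕ) : ℝ) ^ ((b : ℝ) / 2) = ((p ^ k : ℕ) : ℝ) ^ ((a : ℝ) / 2) := by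
      rw [← h1, ← h2]
    have hba : (b : ℝ) / 2 = (a : ℝ) / 2 := by
      by_contra hne
      rcases lt_or_gt_of_ne hne with h | h
      · exact absurd this (ne_of_lt ((Real.rpow_lt_rpow_left_iff hq1).mpr h))
      · exact absurd this.symm (ne_of_lt ((Real.rpow_lt_rpow_left_iff hq1).mpr h))
    apply hab
    have : (b : ℝ) = (a : ℝ) := by linarith
    exact_mod_cast this
  -- transfer to ℚ then to K
  have hcopQ : IsCoprime P χ := (Polynomial.isCoprime_map (algebraMap ℚ ℂ)).mp hcopC
  have hcopK : IsCoprime (P.map (algebraMap ℚ K)) (χ.map (algebraMap ℚ K)) :=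
    (Polynomial.isCoprime_map (algebraMap ℚ K)).mpr hcopQ
  obtain ⟨u, v, huv⟩ := hcopK
  have hCH : Polynomial.aeval φ (χ.map (algebraMap ℚ K)) = 0 := by
    rw [← hχ]; exact LinearMap.aeval_self_charpoly φ
  have key : (Polynomial.aeval φ u) * (Polynomial.aeval φ (P.map (algebraMap ℚ K))) = 1 := by
    have := congrArg (Polynomial.aeval φ) huv
    simpa [hCH] using this
  have key' : (Polynomial.aeval φ (P.map (algebraMap ℚ K))) * (Polynomial.aeval φ u) = 1 := by
    rw [← map_mul, mul_comm, map_mul, key]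
  have hunit : IsUnit (Polynomial.aeval φ (P.map (algebraMap ℚ K))) :=
    ⟨⟨_, _, key', key⟩, rfl⟩
  exact (Module.End.isUnit_iff _).mp hunit
end

section
/- Let K be a field, let A• and B• be cochain complexes of K-vector spaces, let ψ : A• → B• be a quasi-isomorphism, let e : A• → A• be a morphism of complexes, and let F• ⊆ B• be a subcomplex such that the natural map H^i(B•) → H^i(B•/F•) is surjective for every i. Set F H^i(B) := ker(H^i(B•) → H^i(B•/F•)), and let ē denote the endomorphism of H^i(B•) obtained by transporting H^i(e) along the isomorphism H^i(ψ). Let T• be the mapping fibre of the morphism of complexes A• → A• ⊕ (B•/F•) whose components are e and the composite of ψ with the projection B• → B•/F•. Then for every i there is a short exact sequence of K-vector spaces 0 → H^{i−1}(B•)/ē(F H^{i−1}(B•)) → H^i(T•) → {a ∈ H^i(A•) : H^i(e)(a) = 0 and H^i(ψ)(a) ∈ F H^i(B•)} → 0, in which the surjection is induced by the projection of T• onto A•. (This is the abstract form of the fundamental exact sequence 0 → H_{dR}^{i−1}/P(Φ^e)(F^n H_{dR}^{i−1}) → H_{syn,P}^i → H_{HK}^{i,P(Φ^e)=0} ∩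 F^n H_{dR}^i → 0 of Corollary 'exact sequence when X is of good reduction'.) -/
open CategoryTheory CategoryTheory.Limits CochainComplex HomologicalComplex

universe u₁

section

variable {K : Type u₁} [Field K]
variable (A B Q : CochainComplex (ModuleCat.{u₁} K) ℤ)
variable (ψ : A ⟶ B) (e : A ⟶ A) (π : B ⟶ Q)

/-- The morphism `A → A ⊕ B/F` whose components are `e` and the composite of `ψ`
with the projection `π : B → B/F`. -/
noncomputable def synF : A ⟶ A ⊞ Q := biprod.lift e (ψ ≫ π)

/-- The mapping fibre `T = Fib(A → A ⊕ B/F) = Cone(A → A ⊕ B/F)[-1]`. -/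
noncomputable def synT : CochainComplex (ModuleCat.{u₁} K) ℤ :=
  (mappingCone (synF A B Q ψ e π))⟦(-1 : ℤ)⟧

/-- The projection of `T` onto `A`, induced by the third map of the mapping cone
triangle, shifted by `-1`. -/
noncomputable def synPr : synT A B Q ψ e π ⟶ A :=
  ((mappingCone.triangle (synF A B Q ψ e π)).mor₃)⟦(-1 : ℤ)⟧' ≫
    (shiftFunctorCompIsoId (CochainComplex (ModuleCat.{u₁} K) ℤ) (1 : ℤ) (-1 : ℤ)
      (by norm_num)).hom.app A

/-- The endomorphism `ē` of `H^j(B)` obtained by transporting `H^j(e)` along the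
isomorphism `H^j(ψ)`. -/
noncomputable def eBar (j : ℤ) (hψj : Function.Bijective (homologyMap ψ j)) :
    ↥(B.homology j) →ₗ[K] ↥(B.homology j) :=
  (LinearEquiv.ofBijective (homologyMap ψ j).hom hψj).toLinearMap ∘ₗ
    (homologyMap e j).hom ∘ₗ
      (LinearEquiv.ofBijective (homologyMap ψ j).hom hψj).symm.toLinearMap

/- ### Auxiliary material for the proof of `stmt_5`. -/

open ComplexShape in
/-- Transfer exactness of a short complex of modules along isomorphisms. -/
private lemma transferAux {M₁ M₂ M₃ N₁ N₂ N₃ : ModuleCat.{u₁} K}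
    {a : M₁ ⟶ M₂} {b : M₂ ⟶ M₃} {hab : a ≫ b = 0}
    (hex : (ShortComplex.mk a b hab).Exact)
    (i₁ : M₁ ≅ N₁) (i₂ : M₂ ≅ N₂) (i₃ : M₃ ≅ N₃)
    {a' : N₁ ⟶ N₂} {b' : N₂ ⟶ N₃}
    (s₁ : a ≫ i₂.hom = i₁.hom ≫ a') (s₂ : b ≫ i₃.hom = i₂.hom ≫ b') :
    LinearMap.range a'.hom = LinearMap.ker b'.hom := by
  have hre : LinearMap.range a.hom = LinearMap.ker b.hom := hex.moduleCat_range_eq_ker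
  have hb₁ : Function.Bijective (i₁.hom : M₁ → N₁) := ConcreteCategory.bijective_of_isIso i₁.hom
  have hb₂ : Function.Bijective (i₂.hom : M₂ → N₂) := ConcreteCategory.bijective_of_isIso i₂.hom
  have hb₃ : Function.Bijective (i₃.hom : M₃ → N₃) := ConcreteCategory.bijective_of_isIso i₃.hom
  ext x
  simp only [LinearMap.mem_range, LinearMap.mem_ker]
  constructor
  · rintro ⟨y, rfl⟩
    obtain ⟨z, rfl⟩ := hb₁.2 y
    have h1 : a' (i₁.hom z) = i₂.hom (a z) := (congrArg (fun g => g z) s₁).symm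
    have h2 : b' (i₂.hom (a z)) = i₃.hom (b (a z)) := (congrArg (fun g => g (a z)) s₂).symm
    have h3 : b (a z) = 0 := congrArg (fun g => g z) hab
    rw [h1, h2, h3, map_zero]
  · intro hx
    obtain ⟨y, rfl⟩ := hb₂.2 x
    have h2 : b' (i₂.hom y) = i₃.hom (b y) := (congrArg (fun g => g y) s₂).symm
    have hby : b y = 0 := by
      apply hb₃.1
      rw [← h2, hx, map_zero]
    have : y ∈ LinearMap.range a.hom := by rw [hre]; exact hby
    obtain ⟨z, hz⟩ := this
    exact ⟨i₁.hom z, by rw [← hz]; exact (congrArg (fun g => g z) s₁).symm⟩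

end

section AuxSec

open ComplexShape

variable {K : Type u₁} [Field K]

section General

variable {X Y : CochainComplex (ModuleCat.{u₁} K) ℤ} (φ : X ⟶ Y)

/-- The connecting map `H^{i-1}(Cone φ) → H^i(X)`. -/
private noncomputable def rhoAux (i : ℤ) :
    (mappingCone φ).homology (i - 1) ⟶ X.homology i :=
  (HomologicalComplex.homologyFunctor (ModuleCat.{u₁} K) (up ℤ) 0).shiftMap
    (mappingCone.triangle φ).mor₃ (i - 1) i (by omega)

private lemma key2Aux (i : ℤ) :
    homologyMap (((mappingCone.triangle φ).mor₃)⟦(-1 : ℤ)⟧' ≫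
      (shiftFunctorCompIsoId (CochainComplex (ModuleCat.{u₁} K) ℤ) (1 : ℤ) (-1 : ℤ)
        (by norm_num)).hom.app X) i =
    ((HomologicalComplex.homologyFunctor (ModuleCat.{u₁} K) (up ℤ) 0).shiftIso (-1) i (i - 1)
        (by omega)).hom.app (mappingCone φ) ≫ rhoAux φ i :=
  ((HomologicalComplex.homologyFunctor (ModuleCat.{u₁} K) (up ℤ) 0
    ).shiftIso_hom_app_comp_shiftMap_of_add_eq_zero
    (mappingCone.triangle φ).mor₃ (-1) (by omega) (i - 1) i (by omega)).symm

private lemma E1Aux (i : ℤ) :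
    LinearMap.range (homologyMap (mappingCone.inr φ) (i - 1)).hom = LinearMap.ker (rhoAux φ i).hom := by
  have hex := (HomotopyCategory.homologyFunctor (ModuleCat.{u₁} K) (up ℤ)
    0).homologySequence_exact₃ _ (HomotopyCategory.mappingCone_triangleh_distinguished φ)
    (i - 1) i (by omega)
  refine transferAux hex ((HomotopyCategory.homologyFunctorFactors _ (up ℤ) (i - 1)).app Y)
    ((HomotopyCategory.homologyFunctorFactors _ (up ℤ) (i - 1)).app (mappingCone φ))
    ((HomotopyCategory.homologyFunctorFactors _ (up ℤ) i).app X) ?_ ?_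
  · exact (HomotopyCategory.homologyFunctorFactors _ (up ℤ) (i - 1)).hom.naturality
      (mappingCone.inr φ)
  · rw [homologySequenceδ_quotient_mapTriangle_obj]
    dsimp only [rhoAux, CochainComplex.mappingCone.triangle, Pretriangulated.Triangle.mk,
      Iso.app_hom, Iso.app_inv]
    erw [Category.assoc, Category.assoc, Iso.inv_hom_id_app, Category.comp_id]

private lemma E2Aux (i : ℤ) :
    LinearMap.range (rhoAux φ i).hom = LinearMap.ker (homologyMap φ i).hom := by
  have hex := (HomotopyCategory.homologyFunctor (ModuleCat.{u₁} K) (up ℤ)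
    0).homologySequence_exact₁ _ (HomotopyCategory.mappingCone_triangleh_distinguished φ)
    (i - 1) i (by omega)
  refine transferAux hex
    ((HomotopyCategory.homologyFunctorFactors _ (up ℤ) (i - 1)).app (mappingCone φ))
    ((HomotopyCategory.homologyFunctorFactors _ (up ℤ) i).app X)
    ((HomotopyCategory.homologyFunctorFactors _ (up ℤ) i).app Y) ?_ ?_
  · rw [homologySequenceδ_quotient_mapTriangle_obj]
    dsimp only [rhoAux, CochainComplex.mappingCone.triangle, Pretriangulated.Triangle.mk,
      Iso.app_hom, Iso.app_inv]
    erw [Category.assoc, Category.assoc, Iso.inv_hom_id_app, Category.comp_id]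
  · exact (HomotopyCategory.homologyFunctorFactors _ (up ℤ) i).hom.naturality φ

private lemma E3Aux (j : ℤ) :
    LinearMap.range (homologyMap φ j).hom =
      LinearMap.ker (homologyMap (mappingCone.inr φ) j).hom := by
  have hex := (HomotopyCategory.homologyFunctor (ModuleCat.{u₁} K) (up ℤ)
    0).homologySequence_exact₂ _ (HomotopyCategory.mappingCone_triangleh_distinguished φ) j
  refine transferAux hex ((HomotopyCategory.homologyFunctorFactors _ (up ℤ) j).app X)
    ((HomotopyCategory.homologyFunctorFactors _ (up ℤ) j).app Y)
    ((HomotopyCategory.homologyFunctorFactors _ (up ℤ) j).app (mappingCone φ)) ?_ ?_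
  · exact (HomotopyCategory.homologyFunctorFactors _ (up ℤ) j).hom.naturality φ
  · exact (HomotopyCategory.homologyFunctorFactors _ (up ℤ) j).hom.naturality
      (mappingCone.inr φ)

end General

variable (A B Q : CochainComplex (ModuleCat.{u₁} K) ℤ)
variable (ψ : A ⟶ B) (e : A ⟶ A) (π : B ⟶ Q)

/-- The canonical identification `H^i(T) ≃ H^{i-1}(Cone)`, as a linear equivalence. -/
private noncomputable def sigmaLin (i : ℤ) :
    ↥((synT A B Q ψ e π).homology i) ≃ₗ[K]
      ↥((mappingCone (synF A B Q ψ e π)).homology (i - 1)) :=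
  LinearEquiv.ofBijective
    (((HomologicalComplex.homologyFunctor (ModuleCat.{u₁} K) (up ℤ) 0).shiftIso (-1) i (i - 1)
        (by omega)).hom.app (mappingCone (synF A B Q ψ e π))).hom
    (by
      exact ConcreteCategory.bijective_of_isIso
        (((HomologicalComplex.homologyFunctor (ModuleCat.{u₁} K) (up ℤ) 0).shiftIso (-1) i
          (i - 1) (by omega)).hom.app (mappingCone (synF A B Q ψ e π))))

private lemma keyPrApply (i : ℤ) (x : ↥((synT A B Q ψ e π).homology i)) :
    homologyMap (synPr A B Q ψ e π) i x =
      rhoAux (synF A B Q ψ e π) i (sigmaLin A B Q ψ e π i x) := by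
  exact congrArg (fun g => g x) (key2Aux (synF A B Q ψ e π) i)

private lemma compFstAux (j : ℤ) :
    homologyMap (synF A B Q ψ e π) j ≫ homologyMap (biprod.fst : A ⊞ Q ⟶ A) j =
      homologyMap e j := by
  rw [← homologyMap_comp]
  congr 1
  simp [synF]

private lemma compSndAux (j : ℤ) :
    homologyMap (synF A B Q ψ e π) j ≫ homologyMap (biprod.snd : A ⊞ Q ⟶ Q) j =
      homologyMap ψ j ≫ homologyMap π j := by
  rw [← homologyMap_comp, ← homologyMap_comp]
  congr 1
  simp [synF]

private lemma inlFstAux (j : ℤ) :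
    homologyMap (biprod.inl : A ⟶ A ⊞ Q) j ≫ homologyMap (biprod.fst : A ⊞ Q ⟶ A) j = 𝟙 _ := by
  rw [← homologyMap_comp, biprod.inl_fst, homologyMap_id]

private lemma inlSndAux (j : ℤ) :
    homologyMap (biprod.inl : A ⟶ A ⊞ Q) j ≫ homologyMap (biprod.snd : A ⊞ Q ⟶ Q) j = 0 := by
  rw [← homologyMap_comp, biprod.inl_snd, homologyMap_zero]

private lemma totalAux (j : ℤ) (x : ↥((A ⊞ Q).homology j)) :
    homologyMap (biprod.inl : A ⟶ A ⊞ Q) j (homologyMap (biprod.fst : A ⊞ Q ⟶ A) j x) +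
      homologyMap (biprod.inr : Q ⟶ A ⊞ Q) j (homologyMap (biprod.snd : A ⊞ Q ⟶ Q) j x) = x := by
  have h2 := congrArg (fun g => homologyMap g j) (biprod.total (X := A) (Y := Q))
  have h3 : homologyMap (biprod.fst ≫ biprod.inl + biprod.snd ≫ biprod.inr : A ⊞ Q ⟶ A ⊞ Q) j =
      homologyMap (biprod.fst : A ⊞ Q ⟶ A) j ≫ homologyMap biprod.inl j +
      homologyMap (biprod.snd : A ⊞ Q ⟶ Q) j ≫ homologyMap biprod.inr j := by
    simp only [← homologyFunctor_map (ModuleCat.{u₁} K) (up ℤ) j, Functor.map_add,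
      Functor.map_comp]
    rfl
  rw [h3, homologyMap_id] at h2
  have h4 := congrArg (fun (g : (A ⊞ Q).homology j ⟶ (A ⊞ Q).homology j) => g x) h2
  simpa using h4

end AuxSec

section

variable {K : Type u₁} [Field K]
variable (A B Q : CochainComplex (ModuleCat.{u₁} K) ℤ)
variable (ψ : A ⟶ B) (e : A ⟶ A) (π : B ⟶ Q)

/-- Let `ψ : A → B` be a quasi-isomorphism of cochain complexes of `K`-vector
spaces, `e : A → A` an endomorphism, and `π : B → B/F` the (degreewise
surjective) projection to the quotient by a subcomplex `F ⊆ B`, such that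
`H^i(B) → H^i(B/F)` is surjective for all `i`; set `F H^i(B) := ker(H^i(π))`.
Let `T` be the mapping fibre of `(e, π∘ψ) : A → A ⊕ B/F`.  Then there is a short
exact sequence
`0 → H^{i-1}(B)/ē(F H^{i-1}(B)) → H^i(T) → {a ∈ H^i(A) : H^i(e)a = 0, H^i(ψ)a ∈ F H^i(B)} → 0`,
the surjection being induced by the projection of `T` onto `A`. -/
theorem stmt_5 (hπf : ∀ i, Function.Surjective (π.f i))
    (hψ : ∀ i, Function.Bijective (homologyMap ψ i))
    (hπH : ∀ i, Function.Surjective (homologyMap π i)) (i : ℤ) :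
    ∃ ι : (↥(B.homology (i - 1)) ⧸
        Submodule.map (eBar A B ψ e (i - 1) (hψ (i - 1)))
          (LinearMap.ker (homologyMap π (i - 1)).hom)) →ₗ[K]
        ↥((synT A B Q ψ e π).homology i),
      Function.Injective ι ∧
      LinearMap.range ι = LinearMap.ker (homologyMap (synPr A B Q ψ e π) i).hom ∧
      LinearMap.range (homologyMap (synPr A B Q ψ e π) i).hom =
        LinearMap.ker (homologyMap e i).hom ⊓
          Submodule.comap (homologyMap ψ i).hom (LinearMap.ker (homologyMap π i).hom) := by
  classical
  -- elementwise versions of the long exact sequence facts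
  have hE1 := E1Aux (synF A B Q ψ e π) i
  have hE2 := E2Aux (synF A B Q ψ e π) i
  have hE3 := E3Aux (synF A B Q ψ e π) (i - 1)
  -- elementwise component facts, degree i
  have hfst_i : ∀ x, homologyMap (biprod.fst : A ⊞ Q ⟶ A) i
      (homologyMap (synF A B Q ψ e π) i x) = homologyMap e i x :=
    fun x => congrArg (fun g => g x) (compFstAux A B Q ψ e π i)
  have hsnd_i : ∀ x, homologyMap (biprod.snd : A ⊞ Q ⟶ Q) i
      (homologyMap (synF A B Q ψ e π) i x) = homologyMap π i (homologyMap ψ i x) :=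
    fun x => congrArg (fun g => g x) (compSndAux A B Q ψ e π i)
  -- degree i-1
  have hfst_k : ∀ x, homologyMap (biprod.fst : A ⊞ Q ⟶ A) (i - 1)
      (homologyMap (synF A B Q ψ e π) (i - 1) x) = homologyMap e (i - 1) x :=
    fun x => congrArg (fun g => g x) (compFstAux A B Q ψ e π (i - 1))
  have hsnd_k : ∀ x, homologyMap (biprod.snd : A ⊞ Q ⟶ Q) (i - 1)
      (homologyMap (synF A B Q ψ e π) (i - 1) x) =
        homologyMap π (i - 1) (homologyMap ψ (i - 1) x) :=
    fun x => congrArg (fun g => g x) (compSndAux A B Q ψ e π (i - 1))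
  have hinlfst_k : ∀ x, homologyMap (biprod.fst : A ⊞ Q ⟶ A) (i - 1)
      (homologyMap (biprod.inl : A ⟶ A ⊞ Q) (i - 1) x) = x :=
    fun x => congrArg (fun g => g x) (inlFstAux A Q (i - 1))
  have hinlsnd_k : ∀ x, homologyMap (biprod.snd : A ⊞ Q ⟶ Q) (i - 1)
      (homologyMap (biprod.inl : A ⟶ A ⊞ Q) (i - 1) x) = 0 :=
    fun x => congrArg (fun g => g x) (inlSndAux A Q (i - 1))
  -- the two inverse equivalences
  set σ := sigmaLin A B Q ψ e π i with hσdef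
  set Φ := LinearEquiv.ofBijective (homologyMap ψ (i - 1)).hom (hψ (i - 1)) with hΦdef
  have hΦapp : ∀ a, (Φ : ↥(A.homology (i - 1)) → ↥(B.homology (i - 1))) a =
      homologyMap ψ (i - 1) a := fun _ => rfl
  have hkey : ∀ x, homologyMap (synPr A B Q ψ e π) i x =
      rhoAux (synF A B Q ψ e π) i (σ x) := fun x => keyPrApply A B Q ψ e π i x
  -- ρ kills the image of `inr`
  have hρinr : ∀ y, rhoAux (synF A B Q ψ e π) i
      (homologyMap (mappingCone.inr (synF A B Q ψ e π)) (i - 1) y) = 0 := by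
    intro y
    have : homologyMap (mappingCone.inr (synF A B Q ψ e π)) (i - 1) y ∈
        LinearMap.ker (rhoAux (synF A B Q ψ e π) i).hom := by
      rw [← hE1]; exact LinearMap.mem_range_self _ y
    exact this
  -- `inr` kills the image of `synF`
  have hinrF : ∀ a, homologyMap (mappingCone.inr (synF A B Q ψ e π)) (i - 1)
      (homologyMap (synF A B Q ψ e π) (i - 1) a) = 0 := by
    intro a
    have : homologyMap (synF A B Q ψ e π) (i - 1) a ∈
        LinearMap.ker (homologyMap (mappingCone.inr (synF A B Q ψ e π)) (i - 1)).hom := by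
      rw [← hE3]; exact LinearMap.mem_range_self _ a
    exact this
  -- the map `j0`
  set j0 : ↥(B.homology (i - 1)) →ₗ[K] ↥((synT A B Q ψ e π).homology i) :=
    σ.symm.toLinearMap ∘ₗ
      (((homologyMap (mappingCone.inr (synF A B Q ψ e π)) (i - 1)).hom :
          ↥((A ⊞ Q).homology (i - 1)) →ₗ[K]
            ↥((mappingCone (synF A B Q ψ e π)).homology (i - 1))) ∘ₗ
        ((homologyMap (biprod.inl : A ⟶ A ⊞ Q) (i - 1)).hom ∘ₗ Φ.symm.toLinearMap)) with hj0def
  have hj0 : ∀ b, j0 b = σ.symm (homologyMap (mappingCone.inr (synF A B Q ψ e π)) (i - 1)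
      (homologyMap (biprod.inl : A ⟶ A ⊞ Q) (i - 1) (Φ.symm b))) := fun _ => rfl
  -- kernel of j0
  have hkerj0 : LinearMap.ker j0 =
      Submodule.map (eBar A B ψ e (i - 1) (hψ (i - 1)))
        (LinearMap.ker (homologyMap π (i - 1)).hom) := by
    ext b
    simp only [LinearMap.mem_ker, Submodule.mem_map]
    constructor
    · intro hb
      rw [hj0] at hb
      have hb' : homologyMap (mappingCone.inr (synF A B Q ψ e π)) (i - 1)
          (homologyMap (biprod.inl : A ⟶ A ⊞ Q) (i - 1) (Φ.symm b)) = 0 := by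
        have := congrArg σ hb
        rwa [LinearEquiv.apply_symm_apply, map_zero] at this
      have : homologyMap (biprod.inl : A ⟶ A ⊞ Q) (i - 1) (Φ.symm b) ∈
          LinearMap.range (homologyMap (synF A B Q ψ e π) (i - 1)).hom := by
        rw [hE3]; exact hb'
      obtain ⟨a, ha⟩ := this
      have hea : homologyMap e (i - 1) a = Φ.symm b := by
        rw [← hfst_k a, ha, hinlfst_k]
      have hπψa : homologyMap π (i - 1) (homologyMap ψ (i - 1) a) = 0 := by
        rw [← hsnd_k a, ha, hinlsnd_k]
      refine ⟨homologyMap ψ (i - 1) a, hπψa, ?_⟩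
      rw [eBar]
      simp only [LinearMap.coe_comp, Function.comp_apply, LinearEquiv.coe_coe]
      rw [← hΦdef, ← hΦapp, LinearEquiv.symm_apply_apply, hea, LinearEquiv.apply_symm_apply]
    · rintro ⟨x, hx, rfl⟩
      rw [hj0]
      have hxb : Φ.symm ((eBar A B ψ e (i - 1) (hψ (i - 1))) x) =
          homologyMap e (i - 1) (Φ.symm x) := by
        rw [eBar]
        simp only [LinearMap.coe_comp, Function.comp_apply, LinearEquiv.coe_coe]
        rw [← hΦdef, LinearEquiv.symm_apply_apply]
      rw [hxb]
      have hψa : homologyMap ψ (i - 1) (Φ.symm x) = x := by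
        rw [← hΦapp, LinearEquiv.apply_symm_apply]
      -- synF (Φ.symm x) = inl (e (Φ.symm x))
      have htot := totalAux A Q (i - 1)
        (homologyMap (synF A B Q ψ e π) (i - 1) (Φ.symm x))
      rw [hfst_k, hsnd_k, hψa, hx, map_zero, add_zero] at htot
      rw [htot, hinrF, map_zero]
  -- range of j0
  have hrangej0 : LinearMap.range j0 = LinearMap.ker (homologyMap (synPr A B Q ψ e π) i).hom := by
    ext x
    simp only [LinearMap.mem_range, LinearMap.mem_ker]
    constructor
    · rintro ⟨b, rfl⟩
      rw [hkey, hj0, LinearEquiv.apply_symm_apply, hρinr]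
    · intro hx
      have hσx : σ x ∈ LinearMap.range
          (homologyMap (mappingCone.inr (synF A B Q ψ e π)) (i - 1)).hom := by
        rw [hE1]
        rw [hkey] at hx
        exact hx
      obtain ⟨y, hy⟩ := hσx
      -- choose a with π ψ a = snd y
      obtain ⟨u, hu⟩ := hπH (i - 1) (homologyMap (biprod.snd : A ⊞ Q ⟶ Q) (i - 1) y)
      obtain ⟨a, ha⟩ := (hψ (i - 1)).2 u
      have hsndz : homologyMap (biprod.snd : A ⊞ Q ⟶ Q) (i - 1)
          (y - homologyMap (synF A B Q ψ e π) (i - 1) a) = 0 := by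
        rw [map_sub, hsnd_k, ha, hu, sub_self]
      have htot := totalAux A Q (i - 1) (y - homologyMap (synF A B Q ψ e π) (i - 1) a)
      rw [hsndz, map_zero, add_zero] at htot
      refine ⟨Φ (homologyMap (biprod.fst : A ⊞ Q ⟶ A) (i - 1)
        (y - homologyMap (synF A B Q ψ e π) (i - 1) a)), ?_⟩
      rw [hj0, LinearEquiv.symm_apply_apply, htot, map_sub, hinrF, sub_zero, hy,
        LinearEquiv.symm_apply_apply]
  -- assemble
  refine ⟨Submodule.liftQ _ j0 (le_of_eq hkerj0.symm), ?_, ?_, ?_⟩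
  · rw [← LinearMap.ker_eq_bot]
    exact Submodule.ker_liftQ_eq_bot _ _ _ (le_of_eq hkerj0)
  · rw [Submodule.range_liftQ]
    exact hrangej0
  · -- third: range of H(pr) = ker H(e) ⊓ (H ψ)⁻¹ (ker H π)
    ext x
    simp only [LinearMap.mem_range, Submodule.mem_inf, LinearMap.mem_ker, Submodule.mem_comap]
    constructor
    · rintro ⟨t, rfl⟩
      have hFzero : homologyMap (synF A B Q ψ e π) i
          (homologyMap (synPr A B Q ψ e π) i t) = 0 := by
        have : homologyMap (synPr A B Q ψ e π) i t ∈
            LinearMap.ker (homologyMap (synF A B Q ψ e π) i).hom := by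
          rw [← hE2, hkey]
          exact LinearMap.mem_range_self _ _
        exact this
      constructor
      · rw [← hfst_i, hFzero, map_zero]
      · rw [← hsnd_i, hFzero, map_zero]
    · rintro ⟨h1, h2⟩
      have hFzero : homologyMap (synF A B Q ψ e π) i x = 0 := by
        have htot := totalAux A Q i (homologyMap (synF A B Q ψ e π) i x)
        rw [hfst_i, hsnd_i, h1, h2, map_zero, map_zero, add_zero] at htot
        exact htot.symm
      have : x ∈ LinearMap.range (rhoAux (synF A B Q ψ e π) i).hom := by
        rw [hE2]
        exact hFzero
      obtain ⟨t, ht⟩ := this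
      obtain ⟨s, hs⟩ := σ.surjective t
      exact ⟨s, by rw [hkey, hs, ht]⟩

end
end
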